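/- Let G be an n-resource selection game. For every nonempty R ⊆ {1,…,n}, every two Nash equilibria s and s' of G, every k ∈ R with s_k(R) > 0 and every k' ∈ R with s'_{k'}(R) > 0, one has h_k^s = h_{k'}^{s'}; i.e., every player type experiences the same cost in all Nash equilibria. -/

import Mathlib

open scoped NNReal

namespace RSG

/-- A consumption profile in an `n`-resource selection game: each nonempty type
`R ⊆ [n]` distributes its mass `μ R` among the resources in `R`. -/
def IsProfile (n : ℕ) (μ : Finset (Fin n) → ℝ≥0) (s : Finset (Fin n) → Fin n → ℝ≥0) : Prop :=
  (∀ R : Finset (Fin n), ∀ j : Fin n, j ∉ R → s R j = 0) ∧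
  (∀ R : Finset (Fin n), R.Nonempty → ∑ j ∈ R, s R j = μ R)

/-- The load on resource `j` in profile `s`. -/
def load (n : ℕ) (s : Finset (Fin n) → Fin n → ℝ≥0) (j : Fin n) : ℝ≥0 :=
  ∑ R : Finset (Fin n), s R j

/-- The cost of resource `j` in profile `s`. -/
def cost (n : ℕ) (f : Fin n → ℝ≥0 → ℝ) (s : Finset (Fin n) → Fin n → ℝ≥0) (j : Fin n) : ℝ :=
  f j (load n s j)

/-- A Nash equilibrium. -/
def IsNash (n : ℕ) (f : Fin n → ℝ≥0 → ℝ) (μ : Finset (Fin n) → ℝ≥0)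
    (s : Finset (Fin n) → Fin n → ℝ≥0) : Prop :=
  IsProfile n μ s ∧
  ∀ R : Finset (Fin n), ∀ k ∈ R, 0 < s R k → ∀ j ∈ R, cost n f s k ≤ cost n f s j

/-- A strong Nash equilibrium: a Nash equilibrium `s` such that there is no
consumption profile `s' ≠ s` in which every player who strictly increases its
consumption of some resource `k` (i.e. `s' R k > s R k`) pays, at `k` in `s'`,
strictly less than the common equilibrium cost `h^R` of its type
(expressed via: less than `cost s j` for every `j` in the support of `s R`). -/
def IsStrong (n : ℕ) (f : Fin n → ℝ≥0 → ℝ) (μ : Finset (Fin n) → ℝ≥0)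
    (s : Finset (Fin n) → Fin n → ℝ≥0) : Prop :=
  IsNash n f μ s ∧
  ¬ ∃ s' : Finset (Fin n) → Fin n → ℝ≥0, IsProfile n μ s' ∧ s' ≠ s ∧
    ∀ R : Finset (Fin n), ∀ k : Fin n, s R k < s' R k →
      ∀ j : Fin n, 0 < s R j → cost n f s' k < cost n f s j

end RSG

open RSG


/-- Per-type variational inequality: in a Nash equilibrium `t`, the spending of
type `R` under `t` (at costs of `t`) is at most that of any profile `u`. -/
lemma key_ineq (n : ℕ) (f : Fin n → ℝ≥0 → ℝ) (μ : Finset (Fin n) → ℝ≥0)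
    (t u : Finset (Fin n) → Fin n → ℝ≥0)
    (ht : IsNash n f μ t) (hu : IsProfile n μ u) (R : Finset (Fin n)) :
    ∑ j, cost n f t j * (t R j : ℝ) ≤ ∑ j, cost n f t j * (u R j : ℝ) := by
  classical
  obtain ⟨⟨hts, htm⟩, htn⟩ := ht
  obtain ⟨hus, hum⟩ := hu
  have hL : ∑ j, cost n f t j * (t R j : ℝ) = ∑ j ∈ R, cost n f t j * (t R j : ℝ) := by
    refine (Finset.sum_subset R.subset_univ ?_).symm
    intro j _ hj; rw [hts R j hj]; simp
  have hU : ∑ j, cost n f t j * (u R j : ℝ) = ∑ j ∈ R, cost n f t j * (u R j : ℝ) := by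
    refine (Finset.sum_subset R.subset_univ ?_).symm
    intro j _ hj; rw [hus R j hj]; simp
  rw [hL, hU]
  by_cases hex : ∃ k ∈ R, 0 < t R k
  · obtain ⟨k, hkR, hkpos⟩ := hex
    have hRne : R.Nonempty := ⟨k, hkR⟩
    set h : ℝ := cost n f t k with hh
    have hle : ∀ j ∈ R, h ≤ cost n f t j := fun j hj => htn R k hkR hkpos j hj
    have hsupport : ∀ j ∈ R, 0 < t R j → cost n f t j = h :=
      fun j hj hjpos => le_antisymm (htn R j hj hjpos k hkR) (hle j hj)
    have e1 : ∑ j ∈ R, cost n f t j * (t R j : ℝ) = h * (μ R : ℝ) := by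
      have : ∑ j ∈ R, cost n f t j * (t R j : ℝ) = ∑ j ∈ R, h * (t R j : ℝ) := by
        refine Finset.sum_congr rfl fun j hj => ?_
        rcases eq_or_lt_of_le (zero_le : (0 : ℝ≥0) ≤ t R j) with h0 | hpos
        · rw [← h0]; simp
        · rw [hsupport j hj hpos]
      rw [this, ← Finset.mul_sum]
      congr 1
      rw [← NNReal.coe_sum, htm R hRne]
    have e2 : h * (μ R : ℝ) ≤ ∑ j ∈ R, cost n f t j * (u R j : ℝ) := by
      have : ∑ j ∈ R, h * (u R j : ℝ) ≤ ∑ j ∈ R, cost n f t j * (u R j : ℝ) :=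
        Finset.sum_le_sum fun j hj =>
          mul_le_mul_of_nonneg_right (hle j hj) (u R j).coe_nonneg
      calc h * (μ R : ℝ) = ∑ j ∈ R, h * (u R j : ℝ) := by
            rw [← Finset.mul_sum, ← NNReal.coe_sum, hum R hRne]
        _ ≤ _ := this
    rw [e1]; exact e2
  · push_neg at hex
    have hz : ∀ j ∈ R, t R j = 0 := fun j hj => le_antisymm (hex j hj) zero_le
    have hL0 : ∑ j ∈ R, cost n f t j * (t R j : ℝ) = 0 :=
      Finset.sum_eq_zero fun j hj => by rw [hz j hj]; simp
    rcases R.eq_empty_or_nonempty with rfl | hRne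
    · simp
    · have hmu : μ R = 0 := by
        rw [← htm R hRne]; exact Finset.sum_eq_zero hz
      have huz : ∀ j ∈ R, u R j = 0 := by
        intro j hj
        have : ∑ j ∈ R, u R j = 0 := by rw [hum R hRne, hmu]
        exact (Finset.sum_eq_zero_iff.mp this) j hj
      have hU0 : ∑ j ∈ R, cost n f t j * (u R j : ℝ) = 0 :=
        Finset.sum_eq_zero fun j hj => by rw [huz j hj]; simp
      rw [hL0, hU0]

/-- Players are indifferent between Nash equilibria: for every
type `R` and any two Nash equilibria `s, s'`, any resource `k ∈ R` used by type
`R` in `s` and any `k' ∈ R` used by type `R` in `s'` have the same cost. -/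
theorem players_indifferent_between_nash (n : ℕ) (f : Fin n → ℝ≥0 → ℝ)
    (μ : Finset (Fin n) → ℝ≥0) (hmono : ∀ j, Monotone (f j))
    (s s' : Finset (Fin n) → Fin n → ℝ≥0)
    (hs : IsNash n f μ s) (hs' : IsNash n f μ s')
    (R : Finset (Fin n)) (hR : R.Nonempty)
    (k : Fin n) (hk : k ∈ R) (hks : 0 < s R k)
    (k' : Fin n) (hk' : k' ∈ R) (hk's : 0 < s' R k') :
    cost n f s k = cost n f s' k' := by
  classical
  obtain ⟨hsn, hnash⟩ := hs
  obtain ⟨hsn', hnash'⟩ := hs'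
  set g : Fin n → ℝ := fun j => cost n f s j with hg
  set g' : Fin n → ℝ := fun j => cost n f s' j with hg'
  have swap : ∀ (t u : Finset (Fin n) → Fin n → ℝ≥0),
      ∑ R : Finset (Fin n), ∑ j, cost n f t j * (u R j : ℝ)
        = ∑ j, cost n f t j * (load n u j : ℝ) := by
    intro t u
    rw [Finset.sum_comm]
    refine Finset.sum_congr rfl fun j _ => ?_
    rw [load, NNReal.coe_sum, Finset.mul_sum]
  have HA : ∑ j, g j * (load n s j : ℝ) ≤ ∑ j, g j * (load n s' j : ℝ) := by
    rw [← swap s s, ← swap s s']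
    exact Finset.sum_le_sum fun R _ => key_ineq n f μ s s' ⟨hsn, hnash⟩ hsn' R
  have HB : ∑ j, g' j * (load n s' j : ℝ) ≤ ∑ j, g' j * (load n s j : ℝ) := by
    rw [← swap s' s', ← swap s' s]
    exact Finset.sum_le_sum fun R _ => key_ineq n f μ s' s ⟨hsn', hnash'⟩ hsn R
  have tnonpos : ∀ j : Fin n,
      (g j - g' j) * ((load n s' j : ℝ) - (load n s j : ℝ)) ≤ 0 := by
    intro j
    rcases le_total (load n s j) (load n s' j) with hle | hle
    · have hgle : g j ≤ g' j := hmono j hle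
      have : (load n s j : ℝ) ≤ (load n s' j : ℝ) := NNReal.coe_le_coe.mpr hle
      exact mul_nonpos_of_nonpos_of_nonneg (by linarith) (by linarith)
    · have hgle : g' j ≤ g j := hmono j hle
      have : (load n s' j : ℝ) ≤ (load n s j : ℝ) := NNReal.coe_le_coe.mpr hle
      exact mul_nonpos_of_nonneg_of_nonpos (by linarith) (by linarith)
  have tsum : ∑ j, (g j - g' j) * ((load n s' j : ℝ) - (load n s j : ℝ)) = 0 := by
    have hle0 : ∑ j, (g j - g' j) * ((load n s' j : ℝ) - (load n s j : ℝ)) ≤ 0 :=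
      Finset.sum_nonpos fun j _ => tnonpos j
    have hge0 : 0 ≤ ∑ j, (g j - g' j) * ((load n s' j : ℝ) - (load n s j : ℝ)) := by
      have expand : ∑ j, (g j - g' j) * ((load n s' j : ℝ) - (load n s j : ℝ))
          = (∑ j, g j * (load n s' j : ℝ) - ∑ j, g j * (load n s j : ℝ))
            + (∑ j, g' j * (load n s j : ℝ) - ∑ j, g' j * (load n s' j : ℝ)) := by
        rw [← Finset.sum_sub_distrib, ← Finset.sum_sub_distrib, ← Finset.sum_add_distrib]
        exact Finset.sum_congr rfl fun j _ => by ring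
      rw [expand]; linarith
    linarith
  have tzero : ∀ j ∈ (Finset.univ : Finset (Fin n)),
      (g j - g' j) * ((load n s' j : ℝ) - (load n s j : ℝ)) = 0 :=
    (Finset.sum_eq_zero_iff_of_nonpos fun j _ => tnonpos j).mp tsum
  have geq : ∀ j : Fin n, g j = g' j := by
    intro j
    rcases mul_eq_zero.mp (tzero j (Finset.mem_univ j)) with h0 | h0
    · linarith [sub_eq_zero.mp h0]
    · have : (load n s' j : ℝ) = (load n s j : ℝ) := by linarith [sub_eq_zero.mp h0]
      have hload : load n s' j = load n s j := NNReal.coe_injective this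
      show cost n f s j = cost n f s' j
      rw [cost, cost, hload]
  have h1 : cost n f s k ≤ cost n f s k' := hnash R k hk hks k' hk'
  have h2 : cost n f s' k' ≤ cost n f s' k := hnash' R k' hk' hk's k hk
  have e1 := geq k
  have e2 := geq k'
  simp only [hg, hg'] at e1 e2
  linarith
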